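/- The Adler–Yamilov map preserves the canonical symplectic form: with brackets {x₁,x₂}=1, {y₁,y₂}=1, {xᵢ,yⱼ}=0, the map (u₁,u₂,v₁,v₂) defined by u₁ = y₁ − (α−β)x₁/(1+x₁y₂), u₂ = y₂, v₁ = x₁, v₂ = x₂ + (α−β)y₂/(1+x₁y₂) satisfies {u₁,u₂}=1, {v₁,v₂}=1, {uᵢ,vⱼ}=0. -/

import Mathlib

/-- Canonical Poisson bracket on ℂ⁴ with coordinates (x₁,x₂,y₁,y₂),
    determined by {x₁,x₂} = {y₁,y₂} = 1 and all other coordinate brackets zero. -/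
noncomputable def pb (f g : ℂ → ℂ → ℂ → ℂ → ℂ) (x₁ x₂ y₁ y₂ : ℂ) : ℂ :=
  (deriv (fun t => f t x₂ y₁ y₂) x₁) * (deriv (fun t => g x₁ t y₁ y₂) x₂) -
  (deriv (fun t => f x₁ t y₁ y₂) x₂) * (deriv (fun t => g t x₂ y₁ y₂) x₁) +
  (deriv (fun t => f x₁ x₂ t y₂) y₁) * (deriv (fun t => g x₁ x₂ y₁ t) y₂) -
  (deriv (fun t => f x₁ x₂ y₁ t) y₂) * (deriv (fun t => g x₁ x₂ t y₂) y₁)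

lemma aux_d1 (c d a : ℂ) (h : 1 + a * d ≠ 0) :
    deriv (fun t => c * t / (1 + t * d)) a = c / (1 + a * d) ^ 2 := by
  have h1 : HasDerivAt (fun t : ℂ => c * t) c a := by
    simpa using (hasDerivAt_id a).const_mul c
  have h2 : HasDerivAt (fun t : ℂ => 1 + t * d) d a := by
    simpa using ((hasDerivAt_id a).mul_const d).const_add 1
  rw [show (fun t => c * t / (1 + t * d)) = (fun t => c * t) / (fun t => 1 + t * d) from rfl,
    (h1.div h2 h).deriv]
  field_simp
  ring

lemma aux_d3 (c a b : ℂ) (h : 1 + a * b ≠ 0) :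
    deriv (fun t => c * t / (1 + a * t)) b = c / (1 + a * b) ^ 2 := by
  have h1 : HasDerivAt (fun t : ℂ => c * t) c b := by
    simpa using (hasDerivAt_id b).const_mul c
  have h2 : HasDerivAt (fun t : ℂ => 1 + a * t) a b := by
    simpa using ((hasDerivAt_id b).const_mul a).const_add 1
  rw [show (fun t => c * t / (1 + a * t)) = (fun t => c * t) / (fun t => 1 + a * t) from rfl,
    (h1.div h2 h).deriv]
  field_simp
  ring

theorem stmt_16 (α β : ℂ) (x₁ x₂ y₁ y₂ : ℂ) (h : 1 + x₁ * y₂ ≠ 0)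
    (u₁f u₂f v₁f v₂f : ℂ → ℂ → ℂ → ℂ → ℂ)
    (hu₁ : u₁f = fun a b c d => c - (α - β) * a / (1 + a * d))
    (hu₂ : u₂f = fun a b c d => d)
    (hv₁ : v₁f = fun a b c d => a)
    (hv₂ : v₂f = fun a b c d => b + (α - β) * d / (1 + a * d)) :
    pb u₁f u₂f x₁ x₂ y₁ y₂ = 1 ∧
    pb v₁f v₂f x₁ x₂ y₁ y₂ = 1 ∧
    pb u₁f v₁f x₁ x₂ y₁ y₂ = 0 ∧
    pb u₁f v₂f x₁ x₂ y₁ y₂ = 0 ∧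
    pb u₂f v₁f x₁ x₂ y₁ y₂ = 0 ∧
    pb u₂f v₂f x₁ x₂ y₁ y₂ = 0 := by
  subst hu₁ hu₂ hv₁ hv₂
  set c := α - β with hc
  have e1 : deriv (fun t => y₁ - c * t / (1 + t * y₂)) x₁ = -(c / (1 + x₁ * y₂) ^ 2) := by
    rw [deriv_const_sub, aux_d1 c y₂ x₁ h]
  have e3 : deriv (fun t => x₂ + c * t / (1 + x₁ * t)) y₂ = c / (1 + x₁ * y₂) ^ 2 := by
    rw [deriv_const_add, aux_d3 c x₁ y₂ h]
  simp only [pb, deriv_const, deriv_id'', deriv_const_add, deriv_add_const, deriv_const_sub,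
    deriv_sub_const, e1, e3]
  norm_num
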